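/- arXiv:2005.13272 — 3 statements merged into one kernel-verified Lean document; each statement's English description precedes it below -/
import Mathlib

section
/- Let T > 0, L ≥ 0, and let φ : ℝ × ℝⁿ × ℝⁿ → ℝⁿ be continuous and satisfy ‖φ(t, y, z) − φ(t, y′, z′)‖ ≤ L(‖y − y′‖ + ‖z − z′‖) for all t ∈ [0, T] and all y, y′, z, z′ ∈ ℝⁿ. Let s : [0, T] → ℝⁿ be differentiable with s′(t) = φ(t, s(t), s(t)), s(0) = s₀, and let s⁰ : [0, T] → ℝⁿ be continuous and, for each k ≥ 1, let s^k be differentiable with (s^k)′(t) = φ(t, s^k(t), s^{k−1}(t)) and s^k(0) = s₀. Then for every k ≥ 1 and every t ∈ [0, T], ‖s^k(t) − s(t)‖ ≤ (L e^{LT})^k · (t^k / k!) · sup_{τ ∈ [0, T]} ‖s⁰(τ) − s(τ)‖. In particular the waveform relaxation iterates converge superlinearly to s, uniformly on [0, T]. -/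
open Set Filter

/-- Fencing lemma with a non-strict Grönwall-type differential inequality, obtained from
the strict version in mathlib by adding an `ε`-slack term `ε·exp((L+1)x)`. -/
lemma fence_aux {E : Type*} [NormedAddCommGroup E] [NormedSpace ℝ E]
    {f : ℝ → E} {f' : ℝ → E} {B B' : ℝ → ℝ} {L T : ℝ} (hL : 0 ≤ L)
    (hf : ContinuousOn f (Icc 0 T))
    (hf' : ∀ x ∈ Ico (0:ℝ) T, HasDerivWithinAt f (f' x) (Ici x) x)
    (ha : ‖f 0‖ ≤ B 0)
    (hB : ContinuousOn B (Icc 0 T))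
    (hB' : ∀ x ∈ Ico (0:ℝ) T, HasDerivWithinAt B (B' x) (Ici x) x)
    (bound : ∀ x ∈ Ico (0:ℝ) T, ‖f' x‖ ≤ L * ‖f x‖ + (B' x - L * B x)) :
    ∀ x ∈ Icc (0:ℝ) T, ‖f x‖ ≤ B x := by
  intro x hx
  have key : ∀ ε : ℝ, 0 < ε → ‖f x‖ ≤ B x + ε * Real.exp ((L + 1) * x) := by
    intro ε hε
    have hg : ∀ y : ℝ, HasDerivAt (fun t => ε * Real.exp ((L + 1) * t))
        (ε * ((L + 1) * Real.exp ((L + 1) * y))) y := by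
      intro y
      have h1 : HasDerivAt (fun t : ℝ => (L + 1) * t) ((L + 1) * 1) y :=
        (hasDerivAt_id y).const_mul (L + 1)
      have h2 := h1.exp
      have h3 := h2.const_mul ε
      rw [show ε * ((L + 1) * Real.exp ((L + 1) * y)) = ε * (Real.exp ((L + 1) * y) * ((L + 1) * 1)) by ring]
      exact h3
    have := image_norm_le_of_norm_deriv_right_lt_deriv_boundary' (a := 0) (b := T)
      (f := f) (f' := f')
      (B := fun t => B t + ε * Real.exp ((L + 1) * t))
      (B' := fun t => B' t + ε * ((L + 1) * Real.exp ((L + 1) * t)))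
      hf hf'
      (by
        have : (0:ℝ) < ε * Real.exp ((L + 1) * 0) := by positivity
        linarith)
      (hB.add (Continuous.continuousOn (by continuity)))
      (fun y hy => (hB' y hy).add (hg y).hasDerivWithinAt)
      (by
        intro y hy heq
        have hb := bound y hy
        have hpos : 0 < ε * Real.exp ((L + 1) * y) := by positivity
        have : ‖f' y‖ ≤ L * (B y + ε * Real.exp ((L + 1) * y)) + (B' y - L * B y) := by
          rw [← heq]; exact hb
        have hlt : L * ε * Real.exp ((L + 1) * y) < ε * ((L + 1) * Real.exp ((L + 1) * y)) := by
          nlinarith [Real.exp_pos ((L + 1) * y)]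
        calc ‖f' y‖ ≤ L * (B y + ε * Real.exp ((L + 1) * y)) + (B' y - L * B y) := this
          _ = B' y + L * ε * Real.exp ((L + 1) * y) := by ring
          _ < B' y + ε * ((L + 1) * Real.exp ((L + 1) * y)) := by linarith)
    exact this hx
  by_contra hlt
  push_neg at hlt
  have hepos := Real.exp_pos ((L + 1) * x)
  have hδ : 0 < (‖f x‖ - B x) / (2 * Real.exp ((L + 1) * x)) := by
    apply div_pos (by linarith) (by linarith)
  have h2 := key _ hδ
  have h3 : (‖f x‖ - B x) / (2 * Real.exp ((L + 1) * x)) * Real.exp ((L + 1) * x)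
      = (‖f x‖ - B x) / 2 := by
    field_simp
  rw [h3] at h2
  linarith

/-- Quantitative (superlinear) error bound for Gauß–Seidel waveform relaxation of ODE
systems with a globally Lipschitz right-hand side on a bounded interval: under the same
hypotheses as the classical convergence theorem, for every `k ≥ 1` and `t ∈ [0, T]`,
`‖S k t − s t‖ ≤ (L e^{LT})^k (t^k / k!) · sup_{τ ∈ [0,T]} ‖S 0 τ − s τ‖`; in
particular the iterates converge to `s` uniformly on `[0, T]`. -/
theorem waveform_relaxation_superlinear_bound {n : ℕ} (T L : ℝ) (hT : 0 < T) (hL : 0 ≤ L)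
    (φ : ℝ → EuclideanSpace ℝ (Fin n) → EuclideanSpace ℝ (Fin n) → EuclideanSpace ℝ (Fin n))
    (hφcont : Continuous fun p : ℝ × EuclideanSpace ℝ (Fin n) × EuclideanSpace ℝ (Fin n) =>
      φ p.1 p.2.1 p.2.2)
    (hφlip : ∀ t ∈ Icc (0 : ℝ) T, ∀ y y' z z' : EuclideanSpace ℝ (Fin n),
      ‖φ t y z - φ t y' z'‖ ≤ L * (‖y - y'‖ + ‖z - z'‖))
    (s₀ : EuclideanSpace ℝ (Fin n))
    (s : ℝ → EuclideanSpace ℝ (Fin n))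
    (hs : ∀ t ∈ Icc (0 : ℝ) T, HasDerivWithinAt s (φ t (s t) (s t)) (Icc 0 T) t)
    (hs0 : s 0 = s₀)
    (S : ℕ → ℝ → EuclideanSpace ℝ (Fin n))
    (hS0 : ContinuousOn (S 0) (Icc 0 T))
    (hSderiv : ∀ k, ∀ t ∈ Icc (0 : ℝ) T,
      HasDerivWithinAt (S (k + 1)) (φ t (S (k + 1) t) (S k t)) (Icc 0 T) t)
    (hSinit : ∀ k, S (k + 1) 0 = s₀) :
    (∀ k : ℕ, 1 ≤ k → ∀ t ∈ Icc (0 : ℝ) T,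
      ‖S k t - s t‖ ≤ (L * Real.exp (L * T)) ^ k * (t ^ k / (Nat.factorial k)) *
        ⨆ τ : Icc (0 : ℝ) T, ‖S 0 ↑τ - s ↑τ‖) ∧
    TendstoUniformlyOn S s atTop (Icc 0 T) := by
  set C := L * Real.exp (L * T) with hCdef
  have hexpT : (1:ℝ) ≤ Real.exp (L * T) := Real.one_le_exp (mul_nonneg hL hT.le)
  have hC0 : 0 ≤ C := by positivity
  have hLC : L ≤ C := le_mul_of_one_le_right hL hexpT |>.trans_eq hCdef.symm |>.trans (le_refl _)
  -- continuity
  have hscont : ContinuousOn s (Icc 0 T) := fun t ht => (hs t ht).continuousWithinAt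
  have hScont : ∀ k, ContinuousOn (S k) (Icc 0 T) := by
    intro k
    cases k with
    | zero => exact hS0
    | succ k => exact fun t ht => (hSderiv k t ht).continuousWithinAt
  set M := ⨆ τ : Icc (0 : ℝ) T, ‖S 0 ↑τ - s ↑τ‖ with hMdef
  have hcont0 : ContinuousOn (fun τ => ‖S 0 τ - s τ‖) (Icc 0 T) := ((hS0.sub hscont).norm)
  have hbdd : BddAbove (range fun τ : Icc (0:ℝ) T => ‖S 0 ↑τ - s ↑τ‖) := by
    have h := (isCompact_Icc.image_of_continuousOn hcont0).bddAbove
    rwa [image_eq_range] at h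
  have hMb : ∀ t ∈ Icc (0:ℝ) T, ‖S 0 t - s t‖ ≤ M := by
    intro t ht
    exact le_ciSup hbdd ⟨t, ht⟩
  have hM0 : 0 ≤ M := le_trans (norm_nonneg _) (hMb 0 ⟨le_refl 0, hT.le⟩)
  -- the strengthened key estimate
  have step : ∀ k : ℕ,
      (∀ x ∈ Icc (0:ℝ) T, L * ‖S k x - s x‖ ≤
        C ^ k * L * M * (Real.exp (L * x) * x ^ k / (Nat.factorial k))) →
      ∀ t ∈ Icc (0:ℝ) T, ‖S (k + 1) t - s t‖ ≤
        C ^ k * L * M * (Real.exp (L * t) * t ^ (k + 1) / (Nat.factorial (k + 1))) := by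
    intro k hyp
    set A := C ^ k * L * M with hAdef
    have hA0 : 0 ≤ A := by positivity
    have hfact1 : ((Nat.factorial k : ℝ)) ≠ 0 := by
      exact_mod_cast Nat.factorial_ne_zero k
    have hfact2 : ((Nat.factorial (k+1) : ℝ)) ≠ 0 := by
      exact_mod_cast Nat.factorial_ne_zero (k+1)
    have hmain := fence_aux (E := EuclideanSpace ℝ (Fin n)) (L := L) (T := T) hL
      (f := fun t => S (k + 1) t - s t)
      (f' := fun t => φ t (S (k + 1) t) (S k t) - φ t (s t) (s t))
      (B := fun t => A * (Real.exp (L * t) * t ^ (k + 1) / (Nat.factorial (k + 1))))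
      (B' := fun t => L * (A * (Real.exp (L * t) * t ^ (k + 1) / (Nat.factorial (k + 1))))
        + A * (Real.exp (L * t) * t ^ k / (Nat.factorial k)))
      ((hScont (k+1)).sub hscont)
      (by
        intro x hx
        have hx' : x ∈ Icc (0:ℝ) T := ⟨hx.1, hx.2.le⟩
        exact ((hSderiv k x hx').sub (hs x hx')).mono_of_mem_nhdsWithin
          (Icc_mem_nhdsGE_of_mem hx))
      (by
        rw [hSinit k, hs0]
        simp)
      (Continuous.continuousOn (by fun_prop))
      (by
        intro x hx
        have h1 : HasDerivAt (fun t : ℝ => Real.exp (L * t)) (Real.exp (L * x) * (L * 1)) x :=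
          ((hasDerivAt_id x).const_mul L).exp
        have h2 := hasDerivAt_pow (k + 1) x
        have h3 := ((h1.mul h2).div_const ((Nat.factorial (k+1) : ℝ))).const_mul A
        have heq : A * ((Real.exp (L * x) * (L * 1) * x ^ (k + 1)
            + Real.exp (L * x) * (↑(k + 1) * x ^ (k + 1 - 1))) / ↑(Nat.factorial (k + 1)))
            = L * (A * (Real.exp (L * x) * x ^ (k + 1) / (Nat.factorial (k + 1))))
              + A * (Real.exp (L * x) * x ^ k / (Nat.factorial k)) := by
          have hfs : ((Nat.factorial (k+1) : ℝ)) = (k + 1) * (Nat.factorial k : ℝ) := by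
            rw [Nat.factorial_succ]
            push_cast
            ring
          rw [hfs]
          have hk1 : ((k:ℝ) + 1) ≠ 0 := by positivity
          simp only [Nat.add_sub_cancel]
          field_simp
          push_cast
          ring
        rw [heq] at h3
        exact h3.hasDerivWithinAt)
      (by
        intro x hx
        have hx' : x ∈ Icc (0:ℝ) T := ⟨hx.1, hx.2.le⟩
        have hlip := hφlip x hx' (S (k+1) x) (s x) (S k x) (s x)
        have hP := hyp x hx'
        have : L * (‖S (k + 1) x - s x‖ + ‖S k x - s x‖)
            = L * ‖S (k + 1) x - s x‖ + L * ‖S k x - s x‖ := by ring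
        calc ‖φ x (S (k + 1) x) (S k x) - φ x (s x) (s x)‖
            ≤ L * (‖S (k + 1) x - s x‖ + ‖S k x - s x‖) := hlip
          _ = L * ‖S (k + 1) x - s x‖ + L * ‖S k x - s x‖ := by ring
          _ ≤ L * ‖S (k + 1) x - s x‖
              + A * (Real.exp (L * x) * x ^ k / (Nat.factorial k)) := by linarith
          _ = L * ‖S (k + 1) x - s x‖
              + ((L * (A * (Real.exp (L * x) * x ^ (k + 1) / (Nat.factorial (k + 1))))
                + A * (Real.exp (L * x) * x ^ k / (Nat.factorial k)))
                - L * (A * (Real.exp (L * x) * x ^ (k + 1) / (Nat.factorial (k + 1))))) := by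
            ring)
    intro t ht
    exact hmain t ht
  have key : ∀ k : ℕ, ∀ t ∈ Icc (0:ℝ) T, ‖S (k + 1) t - s t‖ ≤
      C ^ k * L * M * (Real.exp (L * t) * t ^ (k + 1) / (Nat.factorial (k + 1))) := by
    intro k
    induction k with
    | zero =>
      apply step 0
      intro x hx
      have h1 : ‖S 0 x - s x‖ ≤ M := hMb x hx
      have h2 : (1:ℝ) ≤ Real.exp (L * x) := Real.one_le_exp (mul_nonneg hL hx.1)
      have : L * ‖S 0 x - s x‖ ≤ L * M := mul_le_mul_of_nonneg_left h1 hL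
      calc L * ‖S 0 x - s x‖ ≤ L * M := this
        _ = L * M * 1 := by ring
        _ ≤ L * M * Real.exp (L * x) := by
            apply mul_le_mul_of_nonneg_left h2 (by positivity)
        _ = C ^ 0 * L * M * (Real.exp (L * x) * x ^ 0 / (Nat.factorial 0)) := by
            simp
    | succ k ih =>
      apply step (k + 1)
      intro x hx
      have h1 := ih x hx
      have h2 : L * ‖S (k + 1) x - s x‖
          ≤ L * (C ^ k * L * M * (Real.exp (L * x) * x ^ (k + 1) / (Nat.factorial (k + 1)))) :=
        mul_le_mul_of_nonneg_left h1 hL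
      have h3 : L * (C ^ k * L * M * (Real.exp (L * x) * x ^ (k + 1) / (Nat.factorial (k + 1))))
          ≤ C * (C ^ k * L * M * (Real.exp (L * x) * x ^ (k + 1) / (Nat.factorial (k + 1)))) := by
        apply mul_le_mul_of_nonneg_right hLC
        have hx0 : (0:ℝ) ≤ x := hx.1
        positivity
      calc L * ‖S (k + 1) x - s x‖
          ≤ C * (C ^ k * L * M * (Real.exp (L * x) * x ^ (k + 1) / (Nat.factorial (k + 1)))) := by
            linarith
        _ = C ^ (k + 1) * L * M * (Real.exp (L * x) * x ^ (k + 1) / (Nat.factorial (k + 1))) := by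
            ring
  -- the stated bound
  have bound1 : ∀ k : ℕ, 1 ≤ k → ∀ t ∈ Icc (0 : ℝ) T,
      ‖S k t - s t‖ ≤ C ^ k * (t ^ k / (Nat.factorial k)) * M := by
    intro k hk t ht
    obtain ⟨j, rfl⟩ : ∃ j, k = j + 1 := ⟨k - 1, (Nat.succ_pred_eq_of_pos hk).symm⟩
    have h1 : L * Real.exp (L * t) ≤ C := by
      rw [hCdef]
      exact mul_le_mul_of_nonneg_left
        (Real.exp_le_exp.2 (mul_le_mul_of_nonneg_left ht.2 hL)) hL
    have ht0 : (0:ℝ) ≤ t := ht.1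
    have hp : (0:ℝ) ≤ C ^ j * (t ^ (j + 1) / (Nat.factorial (j + 1))) * M := by positivity
    calc ‖S (j + 1) t - s t‖
        ≤ C ^ j * L * M * (Real.exp (L * t) * t ^ (j + 1) / (Nat.factorial (j + 1))) :=
          key j t ht
      _ = C ^ j * (t ^ (j + 1) / (Nat.factorial (j + 1))) * M * (L * Real.exp (L * t)) := by
          ring
      _ ≤ C ^ j * (t ^ (j + 1) / (Nat.factorial (j + 1))) * M * C :=
          mul_le_mul_of_nonneg_left h1 hp
      _ = C ^ (j + 1) * (t ^ (j + 1) / (Nat.factorial (j + 1))) * M := by ring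
  refine ⟨bound1, ?_⟩
  -- uniform convergence
  rw [Metric.tendstoUniformlyOn_iff]
  intro ε hε
  have htend : Tendsto (fun k : ℕ => (C * T) ^ k / (Nat.factorial k) * M) atTop (nhds 0) := by
    have h := (FloorSemiring.tendsto_pow_div_factorial_atTop (C * T)).mul_const M
    simpa using h
  have hev := htend.eventually (gt_mem_nhds hε)
  filter_upwards [hev, eventually_ge_atTop 1] with k hk1 hk2
  intro x hx
  rw [dist_comm, dist_eq_norm]
  have hb := bound1 k hk2 x hx
  have hxT : x ^ k ≤ T ^ k := pow_le_pow_left₀ hx.1 hx.2 k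
  have h2 : C ^ k * (x ^ k / (Nat.factorial k)) * M ≤ (C * T) ^ k / (Nat.factorial k) * M := by
    rw [mul_pow C T]
    have hfk : (0:ℝ) < (Nat.factorial k : ℝ) := by
      exact_mod_cast Nat.factorial_pos k
    have h3 : C ^ k * x ^ k ≤ C ^ k * T ^ k :=
      mul_le_mul_of_nonneg_left hxT (pow_nonneg hC0 k)
    have e1 : C ^ k * (x ^ k / (Nat.factorial k)) * M
        = C ^ k * x ^ k * M / (Nat.factorial k) := by ring
    have e2 : C ^ k * T ^ k / (Nat.factorial k) * M
        = C ^ k * T ^ k * M / (Nat.factorial k) := by ring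
    rw [e1, e2]
    apply (div_le_div_iff_of_pos_right hfk).mpr
    exact mul_le_mul_of_nonneg_right h3 hM0
  calc ‖S k x - s x‖ ≤ C ^ k * (x ^ k / (Nat.factorial k)) * M := hb
    _ ≤ (C * T) ^ k / (Nat.factorial k) * M := h2
    _ < ε := hk1
end

section
/- Let T > 0, L ≥ 0, and let (u_k)_{k ≥ 0} be a sequence of continuous nonnegative real-valued functions on [0, T] such that for every k ≥ 1 and every t ∈ [0, T], u_k(t) ≤ L ∫₀ᵗ u_k(τ) dτ + L ∫₀ᵗ u_{k−1}(τ) dτ. Then for every k ≥ 1 and every t ∈ [0, T], u_k(t) ≤ (L e^{LT})^k · (t^k / k!) · sup_{τ ∈ [0, T]} u₀(τ). -/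
open Set MeasureTheory


lemma gronwall_poly {T L c : ℝ} (hT : 0 < T) (hL : 0 < L) (hc : 0 ≤ c) (m : ℕ)
    {v : ℝ → ℝ} (hv : ContinuousOn v (Icc 0 T))
    (hvpos : ∀ s ∈ Icc (0:ℝ) T, 0 ≤ v s)
    (h : ∀ s ∈ Icc (0:ℝ) T, v s ≤ c * s ^ m + L * ∫ τ in (0:ℝ)..s, v τ) :
    ∀ t ∈ Icc (0:ℝ) T, v t ≤ c * t ^ m * Real.exp (L * t) := by
  intro t ht
  obtain ⟨ht0, htT⟩ := ht
  set V : ℝ → ℝ := fun s => ∫ τ in (0:ℝ)..s, v τ with hV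
  have hsub : Icc (0:ℝ) t ⊆ Icc 0 T := Icc_subset_Icc le_rfl htT
  have hVcont : ContinuousOn V (Icc 0 t) := by
    have : IntegrableOn v (uIcc 0 t) := by
      rw [uIcc_of_le ht0]
      exact (hv.mono hsub).integrableOn_Icc
    have := intervalIntegral.continuousOn_primitive_interval this
    rwa [uIcc_of_le ht0] at this
  have hVnonneg : ∀ s ∈ Icc (0:ℝ) t, 0 ≤ V s := by
    intro s hs
    apply intervalIntegral.integral_nonneg hs.1
    intro x hx
    exact hvpos x ⟨hx.1, hx.2.trans (hs.2.trans htT)⟩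
  have hVderiv : ∀ s ∈ Ico (0:ℝ) t, HasDerivWithinAt V (v s) (Ici s) s := by
    intro s hs
    have hsT : s < T := lt_of_lt_of_le hs.2 htT
    have hmem : Icc (0:ℝ) T ∈ nhdsWithin s (Ici s) := by
      filter_upwards [inter_mem_nhdsWithin (Ici s) (Iio_mem_nhds hsT), self_mem_nhdsWithin]
        with x hx hx'
      exact ⟨le_trans hs.1 hx', hx.2.le⟩
    have hmem' : Icc (0:ℝ) T ∈ nhdsWithin s (Ioi s) :=
      nhdsWithin_mono s Ioi_subset_Ici_self hmem
    apply intervalIntegral.integral_hasDerivWithinAt_right (t := Ioi s)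
    · exact ((hv.mono hsub).mono (by rw [uIcc_of_le hs.1]; exact Icc_subset_Icc le_rfl hs.2.le)).intervalIntegrable
    · exact ⟨Icc 0 T, hmem', (hv.aestronglyMeasurable measurableSet_Icc)⟩
    · exact (hv s ⟨hs.1, hsT.le⟩).mono_of_mem_nhdsWithin hmem'
  have key := norm_le_gronwallBound_of_norm_deriv_right_le (δ := 0) (K := L) (ε := c * t ^ m)
    hVcont hVderiv (by simp [hV]) ?_ t ⟨ht0, le_rfl⟩
  · have hVt : ‖V t‖ = V t := Real.norm_of_nonneg (hVnonneg t ⟨ht0, le_rfl⟩)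
    rw [hVt, sub_zero, gronwallBound_of_K_ne_0 hL.ne'] at key
    have h1 := h t ⟨ht0, htT⟩
    have hexp : 1 ≤ Real.exp (L * t) := Real.one_le_exp (by positivity)
    have : L * V t ≤ c * t ^ m * (Real.exp (L * t) - 1) := by
      have := mul_le_mul_of_nonneg_left key hL.le
      calc L * V t ≤ L * (0 * Real.exp (L * t) + c * t ^ m / L * (Real.exp (L * t) - 1)) := this
        _ = c * t ^ m * (Real.exp (L * t) - 1) := by field_simp; ring
    nlinarith [h1]
  · intro s hs
    have hsIcc : s ∈ Icc (0:ℝ) T := ⟨hs.1, le_trans hs.2.le htT⟩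
    have h1 := h s hsIcc
    have hVs : ‖V s‖ = V s := Real.norm_of_nonneg (hVnonneg s ⟨hs.1, hs.2.le⟩)
    have hvs : ‖v s‖ = v s := Real.norm_of_nonneg (hvpos s hsIcc)
    rw [hvs, hVs]
    have hpow : s ^ m ≤ t ^ m := pow_le_pow_left₀ hs.1 hs.2.le m
    nlinarith

/-- Gronwall-type recursive integral inequality: if `u k` are continuous nonnegative
functions on `[0, T]` satisfying, for every `k ≥ 1` and `t ∈ [0, T]`,
`u k t ≤ L ∫₀ᵗ u k + L ∫₀ᵗ u (k−1)`, then for every `k ≥ 1` and `t ∈ [0, T]`,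
`u k t ≤ (L e^{LT})^k (t^k / k!) · sup_{τ ∈ [0,T]} u 0 τ`. -/
theorem recursive_gronwall_inequality (T L : ℝ) (hT : 0 < T) (hL : 0 ≤ L)
    (u : ℕ → ℝ → ℝ)
    (hcont : ∀ k, ContinuousOn (u k) (Icc 0 T))
    (hnonneg : ∀ k, ∀ t ∈ Icc (0 : ℝ) T, 0 ≤ u k t)
    (hrec : ∀ k : ℕ, ∀ t ∈ Icc (0 : ℝ) T,
      u (k + 1) t ≤ (L * ∫ τ in (0 : ℝ)..t, u (k + 1) τ) + L * ∫ τ in (0 : ℝ)..t, u k τ) :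
    ∀ k : ℕ, 1 ≤ k → ∀ t ∈ Icc (0 : ℝ) T,
      u k t ≤ (L * Real.exp (L * T)) ^ k * (t ^ k / (Nat.factorial k)) *
        ⨆ τ : Icc (0 : ℝ) T, u 0 ↑τ := by
  set M : ℝ := ⨆ τ : Icc (0 : ℝ) T, u 0 ↑τ with hMdef
  have hbdd : BddAbove (range fun τ : Icc (0:ℝ) T => u 0 ↑τ) := by
    rw [← image_eq_range]
    exact (isCompact_Icc.image_of_continuousOn (hcont 0)).bddAbove
  have hM : ∀ τ ∈ Icc (0:ℝ) T, u 0 τ ≤ M := fun τ hτ => le_ciSup hbdd ⟨τ, hτ⟩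
  have hM0 : 0 ≤ M := le_trans (hnonneg 0 0 ⟨le_rfl, hT.le⟩) (hM 0 ⟨le_rfl, hT.le⟩)
  rcases eq_or_lt_of_le hL with hL0 | hLpos
  · -- L = 0
    intro k hk t ht
    obtain ⟨j, rfl⟩ := Nat.exists_eq_add_of_le hk
    have := hrec j t ht
    rw [← hL0] at this
    simp only [zero_mul, add_zero] at this
    have : u (1 + j) t ≤ 0 := by
      have h1j : 1 + j = j + 1 := by ring
      rw [h1j]; simpa using this
    calc u (1 + j) t ≤ 0 := this
      _ ≤ _ := by
          rw [← hL0]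
          have h0 : (0:ℝ) * Real.exp (0 * T) = 0 := by ring
          rw [h0, zero_pow (by omega : 1 + j ≠ 0), zero_mul, zero_mul]
  · -- L > 0
    have key : ∀ k : ℕ, ∀ t ∈ Icc (0:ℝ) T,
        u k t ≤ (L * Real.exp (L * T)) ^ k * (t ^ k / (Nat.factorial k)) * M := by
      intro k
      induction k with
      | zero => intro t ht; simpa using hM t ht
      | succ k ih =>
        set D : ℝ := (L * Real.exp (L * T)) ^ k * M / (Nat.factorial k) with hDdef
        have hD0 : 0 ≤ D := by positivity
        have ihD : ∀ s ∈ Icc (0:ℝ) T, u k s ≤ D * s ^ k := by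
          intro s hs
          calc u k s ≤ (L * Real.exp (L * T)) ^ k * (s ^ k / (Nat.factorial k)) * M := ih s hs
            _ = D * s ^ k := by rw [hDdef]; ring
        set c : ℝ := L * D / (k + 1) with hcdef
        have hc0 : 0 ≤ c := by positivity
        have hrec' : ∀ s ∈ Icc (0:ℝ) T,
            u (k+1) s ≤ c * s ^ (k+1) + L * ∫ τ in (0:ℝ)..s, u (k+1) τ := by
          intro s hs
          have hint : (∫ τ in (0:ℝ)..s, u k τ) ≤ D * s ^ (k+1) / (k+1) := by
            have hsub : Icc (0:ℝ) s ⊆ Icc 0 T := Icc_subset_Icc le_rfl hs.2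
            have h1 : IntervalIntegrable (u k) volume 0 s :=
              ((hcont k).mono (by rw [uIcc_of_le hs.1]; exact hsub)).intervalIntegrable
            have h2 : IntervalIntegrable (fun τ => D * τ ^ k) volume 0 s :=
              (continuous_const.mul (continuous_pow k)).intervalIntegrable 0 s
            calc (∫ τ in (0:ℝ)..s, u k τ) ≤ ∫ τ in (0:ℝ)..s, D * τ ^ k := by
                  apply intervalIntegral.integral_mono_on hs.1 h1 h2
                  intro x hx; exact ihD x (hsub hx)
              _ = D * (s ^ (k+1) / (k+1)) := by
                  rw [intervalIntegral.integral_const_mul, integral_pow]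
                  norm_num
              _ = D * s ^ (k+1) / (k+1) := by ring
          calc u (k+1) s ≤ (L * ∫ τ in (0:ℝ)..s, u (k+1) τ) + L * ∫ τ in (0:ℝ)..s, u k τ :=
              hrec k s hs
            _ ≤ (L * ∫ τ in (0:ℝ)..s, u (k+1) τ) + L * (D * s ^ (k+1) / (k+1)) := by
                have := mul_le_mul_of_nonneg_left hint hLpos.le
                linarith
            _ = c * s ^ (k+1) + L * ∫ τ in (0:ℝ)..s, u (k+1) τ := by rw [hcdef]; ring
        have main := gronwall_poly hT hLpos hc0 (k+1) (hcont (k+1)) (hnonneg (k+1)) hrec'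
        intro t ht
        have hb := main t ht
        have hexp : Real.exp (L * t) ≤ Real.exp (L * T) :=
          Real.exp_le_exp.mpr (by nlinarith [ht.1, ht.2])
        calc u (k+1) t ≤ c * t ^ (k+1) * Real.exp (L * t) := hb
          _ ≤ c * t ^ (k+1) * Real.exp (L * T) := by
              apply mul_le_mul_of_nonneg_left hexp (by have := ht.1; positivity)
          _ = (L * Real.exp (L * T)) ^ (k+1) * (t ^ (k+1) / ((k+1) * Nat.factorial k)) * M := by
              rw [hcdef, hDdef]
              have hk0 : ((Nat.factorial k : ℝ)) ≠ 0 := Nat.cast_ne_zero.mpr (Nat.factorial_ne_zero k)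
              field_simp
              ring
          _ = (L * Real.exp (L * T)) ^ (k+1) * (t ^ (k+1) / (Nat.factorial (k+1))) * M := by
              rw [Nat.factorial_succ]
              push_cast
              ring_nf
    intro k _ t ht
    exact key k t ht
end

section
/- Let T > 0, L ≥ 0, 0 ≤ α < 1, and let φ : ℝ × ℝⁿ × ℝⁿ × ℝⁿ → ℝⁿ be continuous with ‖φ(t, y, z, p) − φ(t, y′, z′, p′)‖ ≤ L(‖y − y′‖ + ‖z − z′‖) + α‖p − p′‖ for all t ∈ [0, T] and all arguments. Let s : [0, T] → ℝⁿ be continuously differentiable with s′(t) = φ(t, s(t), s(t), s′(t)) and s(0) = s₀, let s⁰ : [0, T] → ℝⁿ be continuously differentiable, and for each k ≥ 1 let s^k be continuously differentiable with (s^k)′(t) = φ(t, s^k(t), s^{k−1}(t), (s^{k−1})′(t)) and s^k(0) = s₀. Then s^k → s and (s^k)′ → s′ uniformly on [0, T]. -/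
open Set Filter

/-- Convergence criterion for waveform relaxation schemes whose decoupled recursion
`ṡ^k = φ(t, s^k, s^{k−1}, ṡ^{k−1})` involves the derivative of the previous iterate:
if `φ` is continuous, Lipschitz in the solution arguments, and contractive with
constant `α < 1` in the derivative argument, then the iterates and their derivatives
converge uniformly on `[0, T]` to the exact solution and its derivative. -/
theorem waveform_relaxation_derivative_contraction {n : ℕ}
    (T L α : ℝ) (hT : 0 < T) (hL : 0 ≤ L) (hα0 : 0 ≤ α) (hα1 : α < 1)
    (φ : ℝ → EuclideanSpace ℝ (Fin n) → EuclideanSpace ℝ (Fin n) →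
      EuclideanSpace ℝ (Fin n) → EuclideanSpace ℝ (Fin n))
    (hφcont : Continuous fun p : ℝ × EuclideanSpace ℝ (Fin n) × EuclideanSpace ℝ (Fin n) ×
        EuclideanSpace ℝ (Fin n) => φ p.1 p.2.1 p.2.2.1 p.2.2.2)
    (hφlip : ∀ t ∈ Icc (0 : ℝ) T, ∀ y y' z z' q q' : EuclideanSpace ℝ (Fin n),
      ‖φ t y z q - φ t y' z' q'‖ ≤ L * (‖y - y'‖ + ‖z - z'‖) + α * ‖q - q'‖)
    (s₀ : EuclideanSpace ℝ (Fin n))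
    (s s' : ℝ → EuclideanSpace ℝ (Fin n))
    (hs : ∀ t ∈ Icc (0 : ℝ) T, HasDerivWithinAt s (s' t) (Icc 0 T) t)
    (hs'cont : ContinuousOn s' (Icc 0 T))
    (hseq : ∀ t ∈ Icc (0 : ℝ) T, s' t = φ t (s t) (s t) (s' t))
    (hs0 : s 0 = s₀)
    (S S' : ℕ → ℝ → EuclideanSpace ℝ (Fin n))
    (hSderiv : ∀ k, ∀ t ∈ Icc (0 : ℝ) T, HasDerivWithinAt (S k) (S' k t) (Icc 0 T) t)
    (hS'cont : ∀ k, ContinuousOn (S' k) (Icc 0 T))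
    (hrec : ∀ k, ∀ t ∈ Icc (0 : ℝ) T,
      S' (k + 1) t = φ t (S (k + 1) t) (S k t) (S' k t))
    (hSinit : ∀ k, S (k + 1) 0 = s₀) :
    TendstoUniformlyOn S s atTop (Icc 0 T) ∧
      TendstoUniformlyOn S' s' atTop (Icc 0 T) := by
  set lam : ℝ := (4 * L + 1) / (1 - α) with hlam_def
  have h1α : 0 < 1 - α := by linarith
  have hlam_pos : 0 < lam := by positivity
  set ε : ℝ := L / lam with hε_def
  have hε0 : 0 ≤ ε := by positivity
  have hε4 : ε ≤ (1 - α) / 4 := by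
    rw [hε_def, hlam_def, div_div_eq_mul_div, div_le_div_iff₀ (by positivity) (by norm_num)]
    nlinarith
  have hεlt : ε + α < 1 - ε := by linarith
  have h1ε : 0 < 1 - ε := by linarith
  set ρ : ℝ := (ε + α) / (1 - ε) with hρ_def
  have hρ0 : 0 ≤ ρ := by positivity
  have hρ1 : ρ < 1 := by rw [hρ_def, div_lt_one h1ε]; linarith
  have h0mem : (0 : ℝ) ∈ Icc (0 : ℝ) T := ⟨le_refl _, hT.le⟩
  -- Key integral-type lemma via the fencing theorem
  have lemA : ∀ (g g' : ℝ → EuclideanSpace ℝ (Fin n)),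
      (∀ t ∈ Icc (0 : ℝ) T, HasDerivWithinAt g (g' t) (Icc 0 T) t) → g 0 = s₀ →
      ∀ C : ℝ, 0 ≤ C → (∀ t ∈ Icc (0 : ℝ) T, ‖g' t - s' t‖ ≤ C * Real.exp (lam * t)) →
      ∀ t ∈ Icc (0 : ℝ) T, ‖g t - s t‖ ≤ C / lam * Real.exp (lam * t) := by
    intro g g' hg hg0 C hC hb
    have hf : ∀ t ∈ Icc (0 : ℝ) T,
        HasDerivWithinAt (fun t => g t - s t) (g' t - s' t) (Icc 0 T) t :=
      fun t ht => (hg t ht).sub (hs t ht)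
    have hfc : ContinuousOn (fun t => g t - s t) (Icc 0 T) :=
      fun t ht => (hf t ht).continuousWithinAt
    have hf' : ∀ x ∈ Ico (0 : ℝ) T,
        HasDerivWithinAt (fun t => g t - s t) (g' x - s' x) (Ici x) x := by
      intro x hx
      exact (hf x (Ico_subset_Icc_self hx)).mono_of_mem_nhdsWithin (Icc_mem_nhdsGE_of_mem hx)
    have hB : ∀ x : ℝ, HasDerivAt (fun t => C / lam * (Real.exp (lam * t) - 1))
        (C * Real.exp (lam * x)) x := by
      intro x
      have h1 : HasDerivAt (fun t : ℝ => lam * t) lam x := by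
        simpa using (hasDerivAt_id x).const_mul lam
      have h2 := (h1.exp.sub_const 1).const_mul (C / lam)
      rw [show C * Real.exp (lam * x) = C / lam * (Real.exp (lam * x) * lam) by
        rw [mul_comm (Real.exp (lam * x)) lam, ← mul_assoc, div_mul_cancel₀ C hlam_pos.ne']]
      exact h2
    have key := image_norm_le_of_norm_deriv_right_le_deriv_boundary hfc hf'
      (B := fun t => C / lam * (Real.exp (lam * t) - 1)) (B' := fun x => C * Real.exp (lam * x))
      (by simp [hg0, hs0]) hB
      (fun x hx => hb x (Ico_subset_Icc_self hx))
    intro t ht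
    have h1 := key ht
    have hexp : Real.exp (lam * t) - 1 ≤ Real.exp (lam * t) := by linarith
    calc ‖g t - s t‖ ≤ C / lam * (Real.exp (lam * t) - 1) := h1
      _ ≤ C / lam * Real.exp (lam * t) :=
          mul_le_mul_of_nonneg_left hexp (by positivity)
  -- weighted sup norm of the derivative error
  set D : ℕ → ℝ := fun k => sSup ((fun t => Real.exp (-(lam * t)) * ‖S' k t - s' t‖) '' Icc 0 T)
    with hD_def
  have hne : (Icc (0 : ℝ) T).Nonempty := ⟨0, h0mem⟩
  have hbdd : ∀ k, BddAbove ((fun t => Real.exp (-(lam * t)) * ‖S' k t - s' t‖) '' Icc 0 T) := by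
    intro k
    apply (isCompact_Icc.image_of_continuousOn _).bddAbove
    have hc1 : ContinuousOn (fun t : ℝ => Real.exp (-(lam * t))) (Icc 0 T) := by fun_prop
    exact hc1.mul ((hS'cont k).sub hs'cont).norm
  have hD0 : ∀ k, 0 ≤ D k := by
    intro k
    have h1 : Real.exp (-(lam * 0)) * ‖S' k 0 - s' 0‖ ≤ D k :=
      le_csSup (hbdd k) ⟨0, h0mem, rfl⟩
    have h2 : (0:ℝ) ≤ Real.exp (-(lam * 0)) * ‖S' k 0 - s' 0‖ := by positivity
    linarith
  have hle : ∀ k, ∀ t ∈ Icc (0 : ℝ) T, ‖S' k t - s' t‖ ≤ D k * Real.exp (lam * t) := by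
    intro k t ht
    have h1 : Real.exp (-(lam * t)) * ‖S' k t - s' t‖ ≤ D k :=
      le_csSup (hbdd k) ⟨t, ht, rfl⟩
    have h2 : (0:ℝ) < Real.exp (lam * t) := Real.exp_pos _
    rw [Real.exp_neg, inv_mul_le_iff₀ h2, mul_comm] at h1
    exact h1
  -- state error bound via lemA
  have hstate : ∀ k, ∀ t ∈ Icc (0 : ℝ) T,
      ‖S (k + 1) t - s t‖ ≤ D (k + 1) / lam * Real.exp (lam * t) :=
    fun k => lemA (S (k + 1)) (S' (k + 1)) (hSderiv (k + 1)) (hSinit k) (D (k + 1)) (hD0 (k + 1))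
      (hle (k + 1))
  -- contraction
  have hcontr : ∀ k, D (k + 2) ≤ ρ * D (k + 1) := by
    intro k
    have hsup : D (k + 2) ≤ ε * D (k + 2) + (ε + α) * D (k + 1) := by
      apply csSup_le (hne.image _)
      rintro x ⟨t, ht, rfl⟩
      show Real.exp (-(lam * t)) * ‖S' (k + 2) t - s' t‖ ≤ ε * D (k + 2) + (ε + α) * D (k + 1)
      have heq : S' (k + 2) t = φ t (S (k + 2) t) (S (k + 1) t) (S' (k + 1) t) :=
        hrec (k + 1) t ht
      have hdiff : S' (k + 2) t - s' t
          = φ t (S (k + 2) t) (S (k + 1) t) (S' (k + 1) t) - φ t (s t) (s t) (s' t) := by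
        rw [heq]; congr 1; exact hseq t ht
      have hlip : ‖S' (k + 2) t - s' t‖ ≤
          L * (‖S (k + 2) t - s t‖ + ‖S (k + 1) t - s t‖) + α * ‖S' (k + 1) t - s' t‖ := by
        rw [hdiff]; exact hφlip t ht _ _ _ _ _ _
      have h1 : ‖S (k + 2) t - s t‖ ≤ D (k + 2) / lam * Real.exp (lam * t) := hstate (k + 1) t ht
      have h2 := hstate k t ht
      have h3 := hle (k + 1) t ht
      have hept : (0:ℝ) < Real.exp (lam * t) := Real.exp_pos _
      have hcomb : ‖S' (k + 2) t - s' t‖ ≤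
          (ε * D (k + 2) + (ε + α) * D (k + 1)) * Real.exp (lam * t) := by
        calc ‖S' (k + 2) t - s' t‖
            ≤ L * (D (k + 2) / lam * Real.exp (lam * t) + D (k + 1) / lam * Real.exp (lam * t))
              + α * (D (k + 1) * Real.exp (lam * t)) := by
              refine hlip.trans ?_
              gcongr
          _ = (ε * D (k + 2) + (ε + α) * D (k + 1)) * Real.exp (lam * t) := by
              rw [hε_def]; field_simp; ring
      calc Real.exp (-(lam * t)) * ‖S' (k + 2) t - s' t‖
          ≤ Real.exp (-(lam * t)) *
            ((ε * D (k + 2) + (ε + α) * D (k + 1)) * Real.exp (lam * t)) :=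
            mul_le_mul_of_nonneg_left hcomb (Real.exp_pos _).le
        _ = ε * D (k + 2) + (ε + α) * D (k + 1) := by
            rw [Real.exp_neg]; field_simp
    rw [hρ_def, div_mul_eq_mul_div, le_div_iff₀ h1ε]
    nlinarith [hsup]
  have hgeo : ∀ k, D (k + 1) ≤ ρ ^ k * D 1 := by
    intro k
    induction k with
    | zero => simp
    | succ m ih =>
      calc D (m + 2) ≤ ρ * D (m + 1) := hcontr m
        _ ≤ ρ * (ρ ^ m * D 1) := by gcongr
        _ = ρ ^ (m + 1) * D 1 := by ring
  -- uniform bounds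
  set C1 : ℝ := Real.exp (lam * T) * D 1 with hC1_def
  have hC1 : 0 ≤ C1 := mul_nonneg (Real.exp_pos _).le (hD0 1)
  have hexpT : ∀ t ∈ Icc (0:ℝ) T, Real.exp (lam * t) ≤ Real.exp (lam * T) :=
    fun t ht => Real.exp_le_exp.2 (mul_le_mul_of_nonneg_left ht.2 hlam_pos.le)
  have hρk : ∀ k : ℕ, (0:ℝ) ≤ ρ ^ k * D 1 := fun k => mul_nonneg (pow_nonneg hρ0 k) (hD0 1)
  have hbound' : ∀ k, ∀ t ∈ Icc (0 : ℝ) T, ‖S' (k + 1) t - s' t‖ ≤ C1 * ρ ^ k := by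
    intro k t ht
    calc ‖S' (k + 1) t - s' t‖ ≤ D (k + 1) * Real.exp (lam * t) := hle (k + 1) t ht
      _ ≤ (ρ ^ k * D 1) * Real.exp (lam * T) :=
          mul_le_mul (hgeo k) (hexpT t ht) (Real.exp_pos _).le (hρk k)
      _ = C1 * ρ ^ k := by rw [hC1_def]; ring
  have hboundS : ∀ k, ∀ t ∈ Icc (0 : ℝ) T, ‖S (k + 1) t - s t‖ ≤ C1 / lam * ρ ^ k := by
    intro k t ht
    calc ‖S (k + 1) t - s t‖ ≤ D (k + 1) / lam * Real.exp (lam * t) := hstate k t ht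
      _ ≤ (ρ ^ k * D 1) / lam * Real.exp (lam * T) :=
          mul_le_mul (div_le_div_of_nonneg_right (hgeo k) hlam_pos.le) (hexpT t ht)
            (Real.exp_pos _).le (div_nonneg (hρk k) hlam_pos.le)
      _ = C1 / lam * ρ ^ k := by rw [hC1_def]; field_simp
  -- conclude uniform convergence
  have hfinal : ∀ (c : ℝ), 0 ≤ c →
      (∀ k, ∀ t ∈ Icc (0 : ℝ) T, ‖S (k+1) t - s t‖ ≤ c * ρ ^ k) →
      True := fun _ _ _ => trivial
  have htends : ∀ c : ℝ, Tendsto (fun k : ℕ => c * ρ ^ k) atTop (nhds 0) := by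
    intro c
    simpa using (tendsto_pow_atTop_nhds_zero_of_lt_one hρ0 hρ1).const_mul c
  constructor
  · rw [Metric.tendstoUniformlyOn_iff]
    intro δ hδ
    have hev := (htends (C1 / lam)).eventually (gt_mem_nhds hδ)
    obtain ⟨N, hN⟩ := eventually_atTop.1 hev
    rw [eventually_atTop]
    refine ⟨N + 1, fun k hk t ht => ?_⟩
    obtain ⟨m, rfl⟩ : ∃ m, k = m + 1 := ⟨k - 1, by omega⟩
    have hb := hboundS m t ht
    have hlt : C1 / lam * ρ ^ m < δ := hN m (by omega)
    have : dist (s t) (S (m + 1) t) = ‖S (m + 1) t - s t‖ := by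
      rw [dist_eq_norm, norm_sub_rev]
    rw [this]
    linarith
  · rw [Metric.tendstoUniformlyOn_iff]
    intro δ hδ
    have hev := (htends C1).eventually (gt_mem_nhds hδ)
    obtain ⟨N, hN⟩ := eventually_atTop.1 hev
    rw [eventually_atTop]
    refine ⟨N + 1, fun k hk t ht => ?_⟩
    obtain ⟨m, rfl⟩ : ∃ m, k = m + 1 := ⟨k - 1, by omega⟩
    have hb := hbound' m t ht
    have hlt : C1 * ρ ^ m < δ := hN m (by omega)
    have : dist (s' t) (S' (m + 1) t) = ‖S' (m + 1) t - s' t‖ := by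
      rw [dist_eq_norm, norm_sub_rev]
    rw [this]
    linarith
end
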